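/- Let n ≥ 0 and let p, q be unit vectors in EuclideanSpace ℝ (Fin (n+2)) with p ≠ q, and let 0 < R < π/2. Then there exists a unit vector c such that every unit vector z satisfying arccos⟪z, p⟫ ≤ R and arccos⟪z, q⟫ ≤ R also satisfies arccos⟪z, c⟫ < R. -/

import Mathlib

open Real

private lemma cos_le_inner_of_arccos_le {m : ℕ} (z w : EuclideanSpace ℝ (Fin m))
    (hz : ‖z‖ = 1) (hw : ‖w‖ = 1) (R : ℝ) (hR0 : 0 < R) (hRlt : R < π / 2)
    (h : Real.arccos (inner ℝ z w : ℝ) ≤ R) : Real.cos R ≤ (inner ℝ z w : ℝ) := by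
  have h1 : (inner ℝ z w : ℝ) ≤ 1 := by
    have := real_inner_le_norm z w; rw [hz, hw] at this; simpa using this
  have h2 : (-1 : ℝ) ≤ (inner ℝ z w : ℝ) := by
    have := abs_real_inner_le_norm z w; rw [hz, hw] at this
    have := neg_le_of_abs_le this; simpa using this
  have hRpi : R ≤ π := by linarith [Real.pi_pos]
  have := Real.cos_le_cos_of_nonneg_of_le_pi (Real.arccos_nonneg _) hRpi h
  rwa [Real.cos_arccos h2 h1] at this

/-- Spherical lens lemma: on the round unit sphere `S^{n+1} ⊆ ℝ^{n+2}` with geodesic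
distance `d(x, y) = arccos ⟪x, y⟫`, a nontrivial spherical lens of radius `R < π/2`
(intersection of two geodesic balls of radius `R` with distinct centres) is contained
in an open geodesic ball of radius `R` about some unit vector `c`. -/
theorem spherical_lens_subset_open_ball (n : ℕ)
    (p q : EuclideanSpace ℝ (Fin (n + 2))) (hp : ‖p‖ = 1) (hq : ‖q‖ = 1)
    (hpq : p ≠ q) (R : ℝ) (hR0 : 0 < R) (hRlt : R < π / 2) :
    ∃ c : EuclideanSpace ℝ (Fin (n + 2)), ‖c‖ = 1 ∧
      ∀ z : EuclideanSpace ℝ (Fin (n + 2)), ‖z‖ = 1 →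
        Real.arccos (inner ℝ z p : ℝ) ≤ R → Real.arccos (inner ℝ z q : ℝ) ≤ R →
        Real.arccos (inner ℝ z c : ℝ) < R := by
  have hcosR : 0 < Real.cos R := Real.cos_pos_of_mem_Ioo ⟨by linarith [Real.pi_pos], hRlt⟩
  by_cases hneg : p = -q
  · refine ⟨p, hp, fun z hz h1 h2 => ?_⟩
    exfalso
    have a1 := cos_le_inner_of_arccos_le z p hz hp R hR0 hRlt h1
    have a2 := cos_le_inner_of_arccos_le z q hz hq R hR0 hRlt h2
    rw [hneg] at a1
    rw [inner_neg_right] at a1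
    linarith
  · have hs : p + q ≠ 0 := fun h => hneg (by
      have : p = -q := by linear_combination (norm := module) h
      exact this)
    have hsn : 0 < ‖p + q‖ := norm_pos_iff.mpr hs
    have hlt2 : ‖p + q‖ < 2 := by
      have hpq1 : (inner ℝ p q : ℝ) < 1 := by
        have hle : (inner ℝ p q : ℝ) ≤ 1 := by
          have := real_inner_le_norm p q; rw [hp, hq] at this; simpa using this
        exact lt_of_le_of_ne hle (fun h => hpq ((inner_eq_one_iff_of_norm_eq_one hp hq).mp h))
      have hsq : ‖p + q‖ ^ 2 = 2 + 2 * (inner ℝ p q : ℝ) := by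
        rw [@norm_add_sq_real, hp, hq]; ring
      nlinarith [norm_nonneg (p + q)]
    refine ⟨‖p + q‖⁻¹ • (p + q), ?_, fun z hz h1 h2 => ?_⟩
    · rw [norm_smul, norm_inv, norm_norm, inv_mul_cancel₀ (ne_of_gt hsn)]
    · have a1 := cos_le_inner_of_arccos_le z p hz hp R hR0 hRlt h1
      have a2 := cos_le_inner_of_arccos_le z q hz hq R hR0 hRlt h2
      have hic : (inner ℝ z (‖p + q‖⁻¹ • (p + q)) : ℝ)
          = ‖p + q‖⁻¹ * ((inner ℝ z p : ℝ) + (inner ℝ z q : ℝ)) := by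
        rw [real_inner_smul_right, inner_add_right]
      have hgt : Real.cos R < (inner ℝ z (‖p + q‖⁻¹ • (p + q)) : ℝ) := by
        rw [hic]
        have : Real.cos R < ‖p + q‖⁻¹ * (2 * Real.cos R) := by
          rw [lt_inv_mul_iff₀ hsn]
          nlinarith
        nlinarith [inv_pos.mpr hsn]
      have hle1 : (inner ℝ z (‖p + q‖⁻¹ • (p + q)) : ℝ) ≤ 1 := by
        have hcn : ‖(‖p + q‖⁻¹ • (p + q))‖ = 1 := by
          rw [norm_smul, norm_inv, norm_norm, inv_mul_cancel₀ (ne_of_gt hsn)]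
        have := real_inner_le_norm z (‖p + q‖⁻¹ • (p + q))
        rw [hz, hcn] at this; simpa using this
      have : Real.arccos (inner ℝ z (‖p + q‖⁻¹ • (p + q)) : ℝ) < Real.arccos (Real.cos R) :=
        Real.strictAntiOn_arccos ⟨by linarith, Real.cos_le_one R⟩
          ⟨by linarith, hle1⟩ hgt
      rwa [Real.arccos_cos (le_of_lt hR0) (by linarith [Real.pi_pos])] at this
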